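/- Assume σ ≠ 0. The conditional expectation of the number of old blocks re-observed, given complete information, satisfies E[R | π] = j − Σ_{i=1}^{n} m_i·Σ_{k=0}^{m} (V_{n+m,j+k}/V_{n,j})·C(m, k; σ, −n + i + (j−1)σ)/σ^k. -/

import Mathlib

open Finset

attribute [local instance] Classical.propDecidable

noncomputable section

/-- Rising factorial `x(x+1)⋯(x+N−1)`. -/
def risingFac (x : ℝ) (N : ℕ) : ℝ := ∏ i ∈ Finset.range N, (x + i)

/-- Falling factorial `x(x−1)⋯(x−N+1)`. -/
def fallingFac (x : ℝ) (N : ℕ) : ℝ := ∏ i ∈ Finset.range N, (x - i)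

/-- Noncentral generalized factorial coefficient `C(N,k;σ,γ)`. -/
def gfc (N k : ℕ) (σ γ : ℝ) : ℝ :=
  (1 / (Nat.factorial k : ℝ)) *
    ∑ i ∈ Finset.range (k + 1),
      (-1 : ℝ) ^ i * (Nat.choose k i : ℝ) * risingFac (-(i : ℝ) * σ - γ) N

/-- Central generalized factorial coefficient `C(N,k;σ)`. -/
def cgfc (N k : ℕ) (σ : ℝ) : ℝ := gfc N k σ 0

/-- Binomial coefficient over `ℤ`, zero unless `0 ≤ b ≤ a`. -/
def ibinom (a b : ℤ) : ℝ :=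
  if 0 ≤ b ∧ b ≤ a then (Nat.choose a.toNat b.toNat : ℝ) else 0

/-- Multinomial coefficient `m!/((l!)^r (m−rl)!)`, zero if `rl > m`. -/
def multinom (m l r : ℕ) : ℝ :=
  if r * l ≤ m then
    (Nat.factorial m : ℝ) / ((Nat.factorial l : ℝ) ^ r * (Nat.factorial (m - r * l) : ℝ))
  else 0

/-- `P` is a set partition of the finset `s`. -/
def IsPartOn {α : Type*} (s : Finset α) (P : Finset (Finset α)) : Prop :=
  (∀ B ∈ P, B ⊆ s) ∧ ∅ ∉ P ∧ ∀ a ∈ s, ∃! B, B ∈ P ∧ a ∈ B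

/-- Restriction of a partition to `s`. -/
def restrictPart {α : Type*} [DecidableEq α] (P : Finset (Finset α)) (s : Finset α) :
    Finset (Finset α) := (P.image fun C => C ∩ s).erase ∅

/-- Gibbs probability of a partition with block sizes `|C|` and `VN k` the Gibbs weight. -/
def gibbsW {α : Type*} (σ : ℝ) (VN : ℕ → ℝ) (P : Finset (Finset α)) : ℝ :=
  VN P.card * ∏ C ∈ P, risingFac (1 - σ) (C.card - 1)

/-- Ewens–Pitman weight system. -/
def EPV (σ θ : ℝ) : ℕ → ℕ → ℝ :=
  fun N k => (∏ i ∈ Finset.range k, (θ + (i : ℝ) * σ)) / risingFac θ N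

/-- The "old" elements `{1,…,n}` inside `{1,…,n+m}`. -/
def oldSet (n m : ℕ) : Finset (Fin (n + m)) :=
  Finset.univ.filter fun x => (x : ℕ) < n

/-- Number of new elements in the block of `ρ` containing the old block `Bi`. -/
def Scount (n m : ℕ) (Bi : Finset (Fin (n + m))) (ρ : Finset (Finset (Fin (n + m)))) : ℕ :=
  ∑ C ∈ ρ.filter (fun C => Bi ⊆ C), (C \ oldSet n m).card

/-- Partitions of `{1,…,n+m}` extending the partition `πP` of the old elements. -/
def extensions (n m : ℕ) (πP : Finset (Finset (Fin (n + m)))) :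
    Finset (Finset (Finset (Fin (n + m)))) :=
  Finset.univ.filter fun ρ => IsPartOn Finset.univ ρ ∧ restrictPart ρ (oldSet n m) = πP

/-- Conditional expectation given complete information (the initial partition `πP`). -/
def condExpPi (σ : ℝ) (V : ℕ → ℕ → ℝ) (n m : ℕ) (πP : Finset (Finset (Fin (n + m))))
    (f : Finset (Finset (Fin (n + m))) → ℝ) : ℝ :=
  (∑ ρ ∈ extensions n m πP, f ρ * gibbsW σ (V (n + m)) ρ) /
    (∑ ρ ∈ extensions n m πP, gibbsW σ (V (n + m)) ρ)

/-- Partitions of `{1,…,n+m}` whose restriction to the old elements has exactly `j` blocks. -/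
def withJ (n m j : ℕ) : Finset (Finset (Finset (Fin (n + m)))) :=
  Finset.univ.filter fun ρ =>
    IsPartOn Finset.univ ρ ∧ (restrictPart ρ (oldSet n m)).card = j

/-- Partitions of `s` with exactly `j` blocks. -/
def partsJOf {α : Type*} [Fintype α] (s : Finset α) (j : ℕ) :
    Finset (Finset (Finset α)) :=
  Finset.univ.filter fun π' => IsPartOn s π' ∧ π'.card = j

/-- Conditional expectation given the incomplete information `K_n = j`. -/
def condExpK (σ : ℝ) (V : ℕ → ℕ → ℝ) (n m j : ℕ)
    (f : Finset (Finset (Fin (n + m))) → ℝ) : ℝ :=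
  (∑ ρ ∈ withJ n m j, f ρ * gibbsW σ (V (n + m)) ρ) /
    (∑ π' ∈ partsJOf (oldSet n m) j, gibbsW σ (V n) π')

/-- Number of old blocks (indexed by `B`) re-observed in the additional sample. -/
def RcntB (n m j : ℕ) (B : Fin j → Finset (Fin (n + m)))
    (ρ : Finset (Finset (Fin (n + m)))) : ℕ :=
  (Finset.univ.filter fun i : Fin j => Scount n m (B i) ρ ≠ 0).card

/-- Number of old blocks (indexed by `B`) re-observed with frequency `l`. -/
def RlcntB (n m j l : ℕ) (B : Fin j → Finset (Fin (n + m)))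
    (ρ : Finset (Finset (Fin (n + m)))) : ℕ :=
  (Finset.univ.filter fun i : Fin j => Scount n m (B i) ρ = l).card

/-- Number of blocks of the restriction whose containing block has a new element. -/
def Rcnt (n m : ℕ) (ρ : Finset (Finset (Fin (n + m)))) : ℕ :=
  ((restrictPart ρ (oldSet n m)).filter fun Bi =>
    ∃ C ∈ ρ, Bi ⊆ C ∧ (C \ oldSet n m) ≠ ∅).card

/-- Number of blocks of the restriction whose containing block has exactly `l` new elements. -/
def Rlcnt (n m l : ℕ) (ρ : Finset (Finset (Fin (n + m)))) : ℕ :=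
  ((restrictPart ρ (oldSet n m)).filter fun Bi =>
    ∃ C ∈ ρ, Bi ⊆ C ∧ (C \ oldSet n m).card = l).card

/-- Number of bijections from `Fin j` onto the blocks of `π'` satisfying `Q`. -/
def bijCount {α : Type*} [Fintype α] (j : ℕ) (π' : Finset (Finset α))
    (Q : (Fin j → Finset α) → Prop) : ℕ :=
  ((Finset.univ : Finset (Fin j → Finset α)).filter fun β =>
    Function.Injective β ∧ Finset.image β Finset.univ = π' ∧ Q β).card

/-- Conditional expectation given almost-complete information. -/
def condExpTau (σ : ℝ) (V : ℕ → ℕ → ℝ) (n m j p : ℕ) (τ : Fin p → Fin j) (nτ : Fin p → ℕ)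
    (f : Finset (Finset (Fin (n + m))) → ℝ) : ℝ :=
  (∑ ρ ∈ withJ n m j,
      (bijCount j (restrictPart ρ (oldSet n m)) (fun β => ∀ i, (β (τ i)).card = nτ i) : ℝ) *
        f ρ * gibbsW σ (V (n + m)) ρ) /
    (∑ π' ∈ partsJOf (oldSet n m) j,
      (bijCount j π' (fun β => ∀ i, (β (τ i)).card = nτ i) : ℝ) * gibbsW σ (V n) π')

set_option linter.unusedSectionVars false
section LBEutil
open Finset
variable {α : Type*} [DecidableEq α] [Fintype α]

/-- All partitions of `s`. -/
def partsOn (s : Finset α) : Finset (Finset (Finset α)) :=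
  Finset.univ.filter fun P => IsPartOn s P

lemma mem_partsOn {s : Finset α} {P : Finset (Finset α)} :
    P ∈ partsOn s ↔ IsPartOn s P := by simp [partsOn]

lemma IsPartOn.block_nonempty {s : Finset α} {P : Finset (Finset α)}
    (h : IsPartOn s P) {C : Finset α} (hC : C ∈ P) : C.Nonempty := by
  rw [Finset.nonempty_iff_ne_empty]
  rintro rfl; exact h.2.1 hC

lemma IsPartOn.eq_of_mem {s : Finset α} {P : Finset (Finset α)}
    (h : IsPartOn s P) {C D : Finset α} (hC : C ∈ P) (hD : D ∈ P)
    {a : α} (haC : a ∈ C) (haD : a ∈ D) : C = D := by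
  obtain ⟨B, hB, hun⟩ := h.2.2 a (h.1 C hC haC)
  rw [hun C ⟨hC, haC⟩, hun D ⟨hD, haD⟩]

lemma IsPartOn.not_mem_of_not_mem {s : Finset α} {P : Finset (Finset α)}
    (h : IsPartOn s P) {C : Finset α} (hC : C ∈ P) {a : α} (ha : a ∉ s) : a ∉ C :=
  fun hmem => ha (h.1 C hC hmem)

lemma IsPartOn.biUnion_eq {s : Finset α} {P : Finset (Finset α)}
    (h : IsPartOn s P) : P.biUnion id = s := by
  ext a
  simp only [mem_biUnion, id]
  constructor
  · rintro ⟨C, hC, haC⟩; exact h.1 C hC haC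
  · intro ha; obtain ⟨C, ⟨hC, haC⟩, -⟩ := h.2.2 a ha; exact ⟨C, hC, haC⟩

lemma IsPartOn.sum_card {s : Finset α} {P : Finset (Finset α)}
    (h : IsPartOn s P) : ∑ C ∈ P, C.card = s.card := by
  have hd : ∀ C ∈ P, ∀ D ∈ P, C ≠ D → Disjoint C D := by
    intro C hC D hD hne
    rw [Finset.disjoint_left]
    intro a haC haD
    exact hne (h.eq_of_mem hC hD haC haD)
  calc ∑ C ∈ P, C.card = (P.biUnion id).card := by
        exact (Finset.card_biUnion (t := id) hd).symm
  _ = s.card := by rw [h.biUnion_eq]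

lemma IsPartOn.card_le {s : Finset α} {P : Finset (Finset α)}
    (h : IsPartOn s P) : P.card ≤ s.card := by
  calc P.card = ∑ _C ∈ P, 1 := by simp
  _ ≤ ∑ C ∈ P, C.card := Finset.sum_le_sum fun C hC =>
      Finset.card_pos.mpr (h.block_nonempty hC)
  _ = s.card := h.sum_card

lemma IsPartOn.card_pos {s : Finset α} {P : Finset (Finset α)}
    (h : IsPartOn s P) (hs : s.Nonempty) : 0 < P.card := by
  obtain ⟨a, ha⟩ := hs
  obtain ⟨C, ⟨hC, -⟩, -⟩ := h.2.2 a ha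
  exact Finset.card_pos.mpr ⟨C, hC⟩

/-- the unique block containing `a`, as a filter singleton -/
lemma IsPartOn.filter_eq_singleton {s : Finset α} {P : Finset (Finset α)}
    (h : IsPartOn s P) {a : α} (ha : a ∈ s) {C : Finset α} (hC : C ∈ P) (haC : a ∈ C) :
    P.filter (fun D => a ∈ D) = {C} := by
  ext D
  simp only [Finset.mem_filter, Finset.mem_singleton]
  constructor
  · rintro ⟨hD, haD⟩; exact h.eq_of_mem hD hC haD haC
  · rintro rfl; exact ⟨hC, haC⟩

lemma isPartOn_insert_new {s : Finset α} {ρ : Finset (Finset α)} {x : α}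
    (h : IsPartOn s ρ) (hx : x ∉ s) : IsPartOn (insert x s) (insert {x} ρ) := by
  refine ⟨?_, ?_, ?_⟩
  · intro C hC
    rcases Finset.mem_insert.mp hC with rfl | hC
    · simp
    · exact (h.1 C hC).trans (Finset.subset_insert _ _)
  · intro hmem
    rcases Finset.mem_insert.mp hmem with hc | hc
    · exact absurd hc.symm (Finset.singleton_ne_empty x)
    · exact h.2.1 hc
  · intro a ha
    rcases Finset.mem_insert.mp ha with rfl | ha
    · refine ⟨{a}, ⟨Finset.mem_insert_self _ _, Finset.mem_singleton_self a⟩, ?_⟩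
      rintro D ⟨hD, haD⟩
      rcases Finset.mem_insert.mp hD with rfl | hD
      · rfl
      · exact absurd (h.1 D hD haD) hx
    · obtain ⟨C, ⟨hC, haC⟩, hun⟩ := h.2.2 a ha
      refine ⟨C, ⟨Finset.mem_insert_of_mem hC, haC⟩, ?_⟩
      rintro D ⟨hD, haD⟩
      rcases Finset.mem_insert.mp hD with rfl | hD
      · exact absurd (Finset.mem_singleton.mp haD) (fun e => hx (e ▸ ha))
      · exact hun D ⟨hD, haD⟩

lemma isPartOn_insert_into {s : Finset α} {ρ : Finset (Finset α)} {x : α}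
    (h : IsPartOn s ρ) (hx : x ∉ s) {C : Finset α} (hC : C ∈ ρ) :
    IsPartOn (insert x s) (insert (insert x C) (ρ.erase C)) := by
  refine ⟨?_, ?_, ?_⟩
  · intro D hD
    rcases Finset.mem_insert.mp hD with rfl | hD
    · exact Finset.insert_subset_insert _ (h.1 C hC)
    · exact (h.1 D (Finset.mem_of_mem_erase hD)).trans (Finset.subset_insert _ _)
  · intro hmem
    rcases Finset.mem_insert.mp hmem with hc | hc
    · exact absurd hc.symm (Finset.insert_ne_empty x C)
    · exact h.2.1 (Finset.mem_of_mem_erase hc)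
  · intro a ha
    rcases Finset.mem_insert.mp ha with rfl | ha
    · refine ⟨insert a C, ⟨Finset.mem_insert_self _ _, Finset.mem_insert_self _ _⟩, ?_⟩
      rintro D ⟨hD, haD⟩
      rcases Finset.mem_insert.mp hD with rfl | hD
      · rfl
      · exact absurd haD (h.not_mem_of_not_mem (Finset.mem_of_mem_erase hD) hx)
    · obtain ⟨B, ⟨hB, haB⟩, hun⟩ := h.2.2 a ha
      by_cases hBC : B = C
      · subst hBC
        refine ⟨insert x B, ⟨Finset.mem_insert_self _ _, Finset.mem_insert_of_mem haB⟩, ?_⟩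
        rintro D ⟨hD, haD⟩
        rcases Finset.mem_insert.mp hD with rfl | hD
        · rfl
        · exact absurd (hun D ⟨Finset.mem_of_mem_erase hD, haD⟩)
            (Finset.ne_of_mem_erase hD)
      · refine ⟨B, ⟨Finset.mem_insert_of_mem (Finset.mem_erase.mpr ⟨hBC, hB⟩), haB⟩, ?_⟩
        rintro D ⟨hD, haD⟩
        rcases Finset.mem_insert.mp hD with rfl | hD
        · rcases Finset.mem_insert.mp haD with h1 | haD
          · exact absurd (h1 ▸ ha) hx
          · exact (hBC (hun C ⟨hC, haD⟩).symm).elim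
        · exact hun D ⟨Finset.mem_of_mem_erase hD, haD⟩

end LBEutil
section LBEins
open Finset
set_option linter.unusedSectionVars false
variable {α : Type*} [DecidableEq α] [Fintype α]

lemma restrictPart_self {s : Finset α} {ρ : Finset (Finset α)}
    (h : IsPartOn s ρ) : restrictPart ρ s = ρ := by
  unfold restrictPart
  have himg : ρ.image (fun C => C ∩ s) = ρ := by
    have h' : ∀ C ∈ ρ, C ∩ s = C := fun C hC => Finset.inter_eq_left.mpr (h.1 C hC)
    calc ρ.image (fun C => C ∩ s) = ρ.image id := Finset.image_congr (fun C hC => h' C hC)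
    _ = ρ := Finset.image_id
  rw [himg, Finset.erase_eq_of_notMem h.2.1]

lemma restrictPart_insert_new {t : Finset α} {ρ : Finset (Finset α)} {x : α}
    (hx : x ∉ t) :
    restrictPart (insert {x} ρ) t = restrictPart ρ t := by
  unfold restrictPart
  rw [Finset.image_insert]
  have h1 : ({x} : Finset α) ∩ t = ∅ := Finset.singleton_inter_of_notMem hx
  rw [h1]
  ext D
  simp only [Finset.mem_erase, Finset.mem_insert]
  constructor
  · rintro ⟨hD, rfl | hD2⟩
    · exact absurd rfl hD
    · exact ⟨hD, hD2⟩
  · rintro ⟨hD, hD2⟩; exact ⟨hD, Or.inr hD2⟩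

lemma restrictPart_insert_into {t : Finset α} {ρ : Finset (Finset α)} {x : α}
    (hx : x ∉ t) {C : Finset α} (hC : C ∈ ρ) :
    restrictPart (insert (insert x C) (ρ.erase C)) t = restrictPart ρ t := by
  unfold restrictPart
  have h1 : insert x C ∩ t = C ∩ t := Finset.insert_inter_of_notMem hx
  have h2 : ρ.image (fun D => D ∩ t) = insert (C ∩ t) ((ρ.erase C).image (fun D => D ∩ t)) := by
    conv_lhs => rw [← Finset.insert_erase hC]
    rw [Finset.image_insert]
  rw [Finset.image_insert, h1, h2]

lemma isPartOn_erase_singleton {s : Finset α} {ρ' : Finset (Finset α)} {x : α}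
    (h : IsPartOn (insert x s) ρ') (hx : x ∉ s) (hmem : ({x} : Finset α) ∈ ρ') :
    IsPartOn s (ρ'.erase {x}) := by
  have hbl : ∀ D ∈ ρ', D ≠ {x} → x ∉ D := by
    intro D hD hne hxD
    exact hne (h.eq_of_mem hD hmem hxD (Finset.mem_singleton_self x))
  refine ⟨?_, fun hc => h.2.1 (Finset.mem_of_mem_erase hc), ?_⟩
  · intro D hD a haD
    have hD' := Finset.mem_of_mem_erase hD
    rcases Finset.mem_insert.mp (h.1 D hD' haD) with rfl | has
    · exact absurd haD (hbl D hD' (Finset.ne_of_mem_erase hD))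
    · exact has
  · intro a ha
    have hane : a ≠ x := fun e => hx (e ▸ ha)
    obtain ⟨D, ⟨hD, haD⟩, hun⟩ := h.2.2 a (Finset.mem_insert_of_mem ha)
    have hDne : D ≠ {x} := fun e => hane (Finset.mem_singleton.mp (e ▸ haD))
    refine ⟨D, ⟨Finset.mem_erase.mpr ⟨hDne, hD⟩, haD⟩, ?_⟩
    rintro E ⟨hE, haE⟩
    exact hun E ⟨Finset.mem_of_mem_erase hE, haE⟩

lemma isPartOn_remove_from {s : Finset α} {ρ' : Finset (Finset α)} {x : α}
    (h : IsPartOn (insert x s) ρ') (hx : x ∉ s) {C₀ : Finset α}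
    (hC₀ : C₀ ∈ ρ') (hxC₀ : x ∈ C₀) (hne : C₀ ≠ {x}) :
    IsPartOn s (insert (C₀.erase x) (ρ'.erase C₀)) := by
  have hbl : ∀ D ∈ ρ', D ≠ C₀ → x ∉ D := by
    intro D hD hdne hxD
    exact hdne (h.eq_of_mem hD hC₀ hxD hxC₀)
  have hsub : ∀ D ∈ ρ', D ≠ C₀ → D ⊆ s := by
    intro D hD hdne a haD
    rcases Finset.mem_insert.mp (h.1 D hD haD) with rfl | has
    · exact absurd haD (hbl D hD hdne)
    · exact has
  have hCne : (C₀.erase x).Nonempty := by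
    rw [Finset.nonempty_iff_ne_empty]
    intro he
    apply hne
    apply Finset.Subset.antisymm
    · intro a haC
      by_cases hax : a = x
      · simp [hax]
      · exact absurd (Finset.mem_erase.mpr ⟨hax, haC⟩) (by simp [he])
    · simpa using hxC₀
  have hCnotmem : C₀.erase x ∉ ρ' := by
    intro hmem
    obtain ⟨a, haC⟩ := hCne
    have heq := h.eq_of_mem hmem hC₀ haC (Finset.mem_of_mem_erase haC)
    exact Finset.notMem_erase x C₀ (by rw [heq]; exact hxC₀)
  refine ⟨?_, ?_, ?_⟩
  · intro D hD a haD
    rcases Finset.mem_insert.mp hD with rfl | hD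
    · have := Finset.mem_of_mem_erase haD
      rcases Finset.mem_insert.mp (h.1 C₀ hC₀ this) with rfl | has
      · exact absurd rfl (Finset.mem_erase.mp haD).1
      · exact has
    · exact hsub D (Finset.mem_of_mem_erase hD) (Finset.ne_of_mem_erase hD) haD
  · intro hc
    rcases Finset.mem_insert.mp hc with hc | hc
    · exact hCne.ne_empty hc.symm
    · exact h.2.1 (Finset.mem_of_mem_erase hc)
  · intro a ha
    have hane : a ≠ x := fun e => hx (e ▸ ha)
    obtain ⟨D, ⟨hD, haD⟩, hun⟩ := h.2.2 a (Finset.mem_insert_of_mem ha)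
    by_cases hDC : D = C₀
    · subst hDC
      refine ⟨D.erase x, ⟨Finset.mem_insert_self _ _, Finset.mem_erase.mpr ⟨hane, haD⟩⟩, ?_⟩
      rintro E ⟨hE, haE⟩
      rcases Finset.mem_insert.mp hE with rfl | hE
      · rfl
      · exact absurd (hun E ⟨Finset.mem_of_mem_erase hE, haE⟩) (Finset.ne_of_mem_erase hE)
    · refine ⟨D, ⟨Finset.mem_insert_of_mem (Finset.mem_erase.mpr ⟨hDC, hD⟩), haD⟩, ?_⟩
      rintro E ⟨hE, haE⟩
      rcases Finset.mem_insert.mp hE with rfl | hE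
      · exact absurd (hun C₀ ⟨hC₀, Finset.mem_of_mem_erase haE⟩).symm hDC
      · exact hun E ⟨Finset.mem_of_mem_erase hE, haE⟩

/-- The canonical block of `x` in a partition of `insert x s`. -/
lemma exists_xblock {s : Finset α} {ρ' : Finset (Finset α)} {x : α}
    (h : IsPartOn (insert x s) ρ') :
    ∃ C₀, C₀ ∈ ρ' ∧ x ∈ C₀ ∧ ρ'.filter (fun C => x ∈ C) = {C₀} := by
  obtain ⟨C₀, ⟨hC₀, hxC₀⟩, -⟩ := h.2.2 x (Finset.mem_insert_self x s)
  exact ⟨C₀, hC₀, hxC₀, h.filter_eq_singleton (Finset.mem_insert_self x s) hC₀ hxC₀⟩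

/-- The master insertion lemma. -/
lemma sum_partsOn_insert (s : Finset α) (x : α) (hx : x ∉ s)
    (F : Finset (Finset α) → ℝ) :
    ∑ ρ' ∈ partsOn (insert x s), F ρ' =
      ∑ ρ ∈ partsOn s,
        (F (insert {x} ρ) + ∑ C ∈ ρ, F (insert (insert x C) (ρ.erase C))) := by
  classical
  set Φ : (_ : Finset (Finset α)) × Finset α → Finset (Finset α) :=
    fun p => if p.2 = ∅ then insert {x} p.1 else insert (insert x p.2) (p.1.erase p.2) with hΦ
  have hstep : ∀ ρ ∈ partsOn s,
      F (insert {x} ρ) + ∑ C ∈ ρ, F (insert (insert x C) (ρ.erase C)) =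
      ∑ C ∈ insert ∅ ρ, F (Φ ⟨ρ, C⟩) := by
    intro ρ hρ
    rw [Finset.sum_insert (mem_partsOn.mp hρ).2.1]
    have h1 : F (Φ ⟨ρ, ∅⟩) = F (insert {x} ρ) := by simp [hΦ]
    have h2 : ∀ C ∈ ρ, F (insert (insert x C) (ρ.erase C)) = F (Φ ⟨ρ, C⟩) := by
      intro C hC
      have hCne : C ≠ ∅ := fun e => (mem_partsOn.mp hρ).2.1 (e ▸ hC)
      simp [hΦ, hCne]
    rw [Finset.sum_congr rfl h2, ← h1]
  rw [Finset.sum_congr rfl hstep, Finset.sum_sigma']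
  set Ψ : Finset (Finset α) → (_ : Finset (Finset α)) × Finset α := fun ρ' =>
    if ((ρ'.filter (fun C => x ∈ C)).sup id) = {x} then ⟨ρ'.erase {x}, ∅⟩
    else ⟨insert (((ρ'.filter (fun C => x ∈ C)).sup id).erase x)
            (ρ'.erase ((ρ'.filter (fun C => x ∈ C)).sup id)),
          ((ρ'.filter (fun C => x ∈ C)).sup id).erase x⟩ with hΨ
  have hPhiPsi : ∀ ρ' ∈ partsOn (insert x s), Φ (Ψ ρ') = ρ' := by
    intro ρ' hρ'
    have h := mem_partsOn.mp hρ'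
    obtain ⟨C₀, hC₀, hxC₀, hfil⟩ := exists_xblock h
    have hsup : (ρ'.filter (fun C => x ∈ C)).sup id = C₀ := by
      rw [hfil]; exact Finset.sup_singleton
    by_cases hcase : C₀ = ({x} : Finset α)
    · simp only [hΨ, hΦ, hsup, if_pos hcase]
      subst hcase
      exact Finset.insert_erase hC₀
    · have hCne : (C₀.erase x) ≠ ∅ := by
        intro he
        apply hcase
        apply Finset.Subset.antisymm
        · intro a haC
          by_cases hax : a = x
          · simp [hax]
          · exact absurd (Finset.mem_erase.mpr ⟨hax, haC⟩) (by simp [he])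
        · simpa using hxC₀
      have hCnotmem : C₀.erase x ∉ ρ'.erase C₀ := by
        intro hmem
        have hmem' := Finset.mem_of_mem_erase hmem
        obtain ⟨a, haC⟩ := Finset.nonempty_iff_ne_empty.mpr hCne
        have := h.eq_of_mem hmem' hC₀ haC (Finset.mem_of_mem_erase haC)
        exact (Finset.ne_of_mem_erase hmem) this
      simp only [hΨ, hΦ, hsup, if_neg hcase, if_neg hCne]
      rw [Finset.erase_insert hCnotmem, Finset.insert_erase hxC₀, Finset.insert_erase hC₀]
  refine Finset.sum_nbij' (i := Ψ) (j := Φ) ?_ ?_ hPhiPsi ?_ ?_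
  · -- Ψ maps partsOn (insert x s) into the sigma set
    intro ρ' hρ'
    have h := mem_partsOn.mp hρ'
    obtain ⟨C₀, hC₀, hxC₀, hfil⟩ := exists_xblock h
    have hsup : (ρ'.filter (fun C => x ∈ C)).sup id = C₀ := by
      rw [hfil]; exact Finset.sup_singleton
    simp only [hΨ, hsup]
    by_cases hcase : C₀ = ({x} : Finset α)
    · rw [if_pos hcase]
      subst hcase
      exact Finset.mem_sigma.mpr ⟨mem_partsOn.mpr (isPartOn_erase_singleton h hx hC₀),
        Finset.mem_insert_self _ _⟩
    · rw [if_neg hcase]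
      exact Finset.mem_sigma.mpr ⟨mem_partsOn.mpr (isPartOn_remove_from h hx hC₀ hxC₀ hcase),
        Finset.mem_insert_of_mem (Finset.mem_insert_self _ _)⟩
  · -- Φ maps the sigma set into partsOn (insert x s)
    rintro ⟨ρ, C⟩ hp
    obtain ⟨hρ, hC⟩ := Finset.mem_sigma.mp hp
    have h := mem_partsOn.mp hρ
    by_cases hCe : C = ∅
    · simp only [hΦ, hCe, if_pos]
      exact mem_partsOn.mpr (isPartOn_insert_new h hx)
    · rcases Finset.mem_insert.mp hC with rfl | hCmem
      · exact absurd rfl hCe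
      · simp only [hΦ, if_neg hCe]
        exact mem_partsOn.mpr (isPartOn_insert_into h hx hCmem)
  · -- Ψ (Φ p) = p
    rintro ⟨ρ, C⟩ hp
    obtain ⟨hρ, hC⟩ := Finset.mem_sigma.mp hp
    have h := mem_partsOn.mp hρ
    have hxblk : ∀ D ∈ ρ, x ∉ D := fun D hD hxD => hx (h.1 D hD hxD)
    have hfilρ : ρ.filter (fun C => x ∈ C) = ∅ := by
      rw [Finset.filter_eq_empty_iff]; exact hxblk
    by_cases hCe : C = ∅
    · subst hCe
      simp only [hΦ, if_pos rfl]
      have hxnot : ({x} : Finset α) ∉ ρ := fun hmem =>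
        hx (h.1 _ hmem (Finset.mem_singleton_self x))
      have hfil : (insert {x} ρ).filter (fun C => x ∈ C) = {({x} : Finset α)} := by
        rw [Finset.filter_insert, if_pos (Finset.mem_singleton_self x), hfilρ]
        rfl
      simp only [hΨ, hfil, Finset.sup_singleton, id, if_true, if_pos rfl]
      rw [Finset.erase_insert hxnot]
    · rcases Finset.mem_insert.mp hC with rfl | hCmem
      · exact absurd rfl hCe
      simp only [hΦ, if_neg hCe]
      have hxC : x ∉ C := hxblk C hCmem
      have hfilE : (ρ.erase C).filter (fun C => x ∈ C) = ∅ := by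
        rw [Finset.filter_eq_empty_iff]
        exact fun D hD => hxblk D (Finset.mem_of_mem_erase hD)
      have hfil : (insert (insert x C) (ρ.erase C)).filter (fun C => x ∈ C)
          = {insert x C} := by
        rw [Finset.filter_insert, if_pos (Finset.mem_insert_self x C), hfilE]
        rfl
      have hCnonempty : C.Nonempty := h.block_nonempty hCmem
      have hne2 : insert x C ≠ ({x} : Finset α) := by
        obtain ⟨c, hc⟩ := hCnonempty
        intro he
        have : c ∈ ({x} : Finset α) := he ▸ Finset.mem_insert_of_mem hc
        exact hxC ((Finset.mem_singleton.mp this) ▸ hc)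
      have hnotmem : insert x C ∉ ρ.erase C := fun hmem =>
        hxblk _ (Finset.mem_of_mem_erase hmem) (Finset.mem_insert_self x C)
      simp only [hΨ, hfil, Finset.sup_singleton, id, if_neg hne2]
      rw [Finset.erase_insert hxC, Finset.erase_insert hnotmem, Finset.insert_erase hCmem]
  · -- values agree
    intro ρ' hρ'
    rw [hPhiPsi ρ' hρ']
end LBEins
section LBEgfc
open Finset

lemma risingFac_zero (x : ℝ) : risingFac x 0 = 1 := by simp [risingFac]

lemma risingFac_succ (x : ℝ) (N : ℕ) :
    risingFac x (N + 1) = risingFac x N * (x + N) := by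
  simp [risingFac, Finset.prod_range_succ]

lemma risingFac_pos {x : ℝ} (hx : 0 < x) (N : ℕ) : 0 < risingFac x N := by
  induction N with
  | zero => simp [risingFac_zero]
  | succ N ih =>
    rw [risingFac_succ]
    exact mul_pos ih (by positivity)

lemma gfc_zero_zero (σ γ : ℝ) : gfc 0 0 σ γ = 1 := by
  simp [gfc, risingFac]

lemma gfc_zero_succ (k : ℕ) (σ γ : ℝ) : gfc 0 (k + 1) σ γ = 0 := by
  unfold gfc
  have h : ∀ i ∈ Finset.range (k + 2),
      (-1 : ℝ) ^ i * ((k+1).choose i : ℝ) * risingFac (-(i : ℝ) * σ - γ) 0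
      = (-1 : ℝ) ^ i * ((k+1).choose i : ℝ) := by
    intro i _; rw [risingFac_zero]; ring
  rw [Finset.sum_congr rfl h]
  have h2 : ∑ i ∈ Finset.range (k + 2), (-1 : ℝ) ^ i * ((k+1).choose i : ℝ) = 0 := by
    have := Int.alternating_sum_range_choose (n := k + 1)
    rw [if_neg (Nat.succ_ne_zero k)] at this
    have h3 : ((∑ i ∈ Finset.range (k + 2), (-1 : ℤ) ^ i * ((k+1).choose i : ℤ) : ℤ) : ℝ) = 0 := by
      rw [this]; simp
    push_cast at h3
    convert h3 using 2
  rw [h2, mul_zero]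

lemma gfc_succ_zero (m : ℕ) (σ γ : ℝ) :
    gfc (m + 1) 0 σ γ = ((m : ℝ) - γ) * gfc m 0 σ γ := by
  unfold gfc
  rw [Finset.sum_range_one, Finset.sum_range_one, risingFac_succ]
  push_cast
  ring

lemma gfc_succ_succ (m k : ℕ) (σ γ : ℝ) :
    gfc (m + 1) (k + 1) σ γ =
      ((m : ℝ) - γ - ((k : ℝ) + 1) * σ) * gfc m (k + 1) σ γ + σ * gfc m k σ γ := by
  have key : ∀ i ∈ Finset.range (k + 2),
      (-1 : ℝ) ^ i * ((k+1).choose i : ℝ) * risingFac (-(i : ℝ) * σ - γ) (m + 1)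
      = ((m : ℝ) - γ - ((k : ℝ) + 1) * σ) *
          ((-1 : ℝ) ^ i * ((k+1).choose i : ℝ) * risingFac (-(i : ℝ) * σ - γ) m)
        + ((k : ℝ) + 1) * σ *
          ((-1 : ℝ) ^ i * ((k).choose i : ℝ) * risingFac (-(i : ℝ) * σ - γ) m) := by
    intro i hi
    rw [risingFac_succ]
    have hle : i ≤ k + 1 := Nat.lt_succ_iff.mp (Finset.mem_range.mp hi)
    have hch : ((k+1).choose i : ℝ) * ((k : ℝ) + 1 - i) = ((k:ℝ) + 1) * ((k).choose i : ℝ) := by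
      have hnat : (k).choose i * (k + 1) = (k+1).choose i * (k + 1 - i) :=
        Nat.choose_mul_succ_eq k i
      have hcast : ((k + 1 - i : ℕ) : ℝ) = (k : ℝ) + 1 - i := by
        push_cast [Nat.cast_sub hle]; ring
    -- from hnat cast
      have hc := congrArg (fun z : ℕ => (z : ℝ)) hnat
      push_cast at hc
      rw [hcast] at hc
      linarith [hc]
    linear_combination ((-1:ℝ)^i * risingFac (-(i : ℝ) * σ - γ) m * σ) * hch
  have hS : ∑ i ∈ Finset.range (k + 2),
      (-1:ℝ)^i * ((k+1).choose i : ℝ) * risingFac (-(i:ℝ)*σ - γ) (m+1)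
      = ((m:ℝ) - γ - ((k:ℝ)+1)*σ) * ∑ i ∈ Finset.range (k + 2),
            (-1:ℝ)^i * ((k+1).choose i : ℝ) * risingFac (-(i:ℝ)*σ - γ) m
        + ((k:ℝ)+1)*σ * ∑ i ∈ Finset.range (k + 1),
            (-1:ℝ)^i * ((k).choose i : ℝ) * risingFac (-(i:ℝ)*σ - γ) m := by
    rw [Finset.sum_congr rfl key, Finset.sum_add_distrib, ← Finset.mul_sum, ← Finset.mul_sum]
    congr 1
    congr 1
    rw [Finset.sum_range_succ]
    simp [Nat.choose_succ_self]
  unfold gfc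
  rw [hS]
  have hf : (((k+1).factorial : ℕ) : ℝ) = ((k:ℝ)+1) * (k.factorial : ℝ) := by
    push_cast [Nat.factorial_succ]; ring
  rw [hf]
  have h0 : (k.factorial : ℝ) ≠ 0 := Nat.cast_ne_zero.mpr (Nat.factorial_ne_zero k)
  have h1 : ((k:ℝ)+1) ≠ 0 := by positivity
  field_simp

/-- The weight recursion solved by the noncentral gfc divided by `σ^k`. -/
def Wfun (σ a : ℝ) : ℕ → ℕ → ℝ
  | 0, 0 => 1
  | 0, _ + 1 => 0
  | m + 1, 0 => (a + m) * Wfun σ a m 0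
  | m + 1, k + 1 => (a + (m : ℝ) - ((k : ℝ) + 1) * σ) * Wfun σ a m (k + 1) + Wfun σ a m k

lemma Wfun_mul_pow (σ a : ℝ) (m k : ℕ) :
    Wfun σ a m k * σ ^ k = gfc m k σ (-a) := by
  induction m generalizing k with
  | zero =>
    cases k with
    | zero => simp [Wfun, gfc_zero_zero]
    | succ k => simp [Wfun, gfc_zero_succ]
  | succ m ih =>
    cases k with
    | zero =>
      rw [gfc_succ_zero]
      simp only [Wfun, pow_zero, mul_one] at *
      rw [show ((m:ℝ) - -a) = a + m by ring, ← ih 0]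
      simp
    | succ k =>
      rw [gfc_succ_succ, ← ih (k+1), ← ih k]
      simp only [Wfun]
      rw [show ((m:ℝ) - -a - ((k:ℝ)+1)*σ) = a + (m:ℝ) - ((k:ℝ)+1)*σ by ring]
      ring

lemma Wfun_eq_zero_of_gt (σ a : ℝ) {m k : ℕ} (h : m < k) : Wfun σ a m k = 0 := by
  induction m generalizing k with
  | zero =>
    match k, h with
    | k + 1, _ => simp [Wfun]
  | succ m ih =>
    match k, h with
    | k + 1, h =>
      simp only [Wfun]
      rw [ih (by omega), ih (by omega)]
      ring

lemma Wfun_eq_gfc_div (σ a : ℝ) (hσ : σ ≠ 0) (m k : ℕ) :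
    Wfun σ a m k = gfc m k σ (-a) / σ ^ k := by
  rw [eq_div_iff (pow_ne_zero _ hσ), Wfun_mul_pow]

end LBEgfc
section LBEmain
open Finset
set_option linter.unusedSectionVars false

lemma card_oldSet (n m : ℕ) : (oldSet n m).card = n := by
  classical
  have himg : (oldSet n m).image (Fin.val) = Finset.range n := by
    ext a
    simp only [oldSet, Finset.mem_image, Finset.mem_filter, Finset.mem_univ, true_and,
      Finset.mem_range]
    constructor
    · rintro ⟨x, hx, rfl⟩; exact hx
    · intro ha
      exact ⟨⟨a, lt_of_lt_of_le ha (Nat.le_add_right n m)⟩, ha, rfl⟩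
  rw [← Finset.card_image_of_injective _ Fin.val_injective, himg, Finset.card_range]

lemma prod_w_insert_new {α : Type*} [DecidableEq α] (σ : ℝ) {ρ : Finset (Finset α)} {x : α}
    (hnot : ({x} : Finset α) ∉ ρ) :
    ∏ C ∈ insert ({x} : Finset α) ρ, risingFac (1-σ) (C.card-1)
      = ∏ C ∈ ρ, risingFac (1-σ) (C.card-1) := by
  rw [Finset.prod_insert hnot]
  simp [risingFac_zero]

lemma prod_w_insert_into {α : Type*} [DecidableEq α] (σ : ℝ) {ρ : Finset (Finset α)}
    {x : α} {C : Finset α} (hC : C ∈ ρ) (hxC : x ∉ C) (hCne : C.Nonempty)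
    (hnm : insert x C ∉ ρ.erase C) :
    ∏ D ∈ insert (insert x C) (ρ.erase C), risingFac (1-σ) (D.card-1)
      = ((C.card : ℝ) - σ) * ∏ D ∈ ρ, risingFac (1-σ) (D.card-1) := by
  rw [Finset.prod_insert hnm, ← Finset.mul_prod_erase ρ _ hC, ← mul_assoc]
  congr 1
  have hcard : (insert x C).card = C.card + 1 := Finset.card_insert_of_notMem hxC
  have hpos : 1 ≤ C.card := Finset.card_pos.mpr hCne
  have h1 : (insert x C).card - 1 = (C.card - 1) + 1 := by omega
  rw [hcard] at h1
  rw [show (insert x C).card - 1 = (C.card - 1) + 1 by omega, risingFac_succ]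
  have hcast : ((C.card - 1 : ℕ) : ℝ) = (C.card : ℝ) - 1 := by
    push_cast [Nat.cast_sub hpos]; ring
  rw [hcast]
  ring

lemma oldSet_nonempty {n m : ℕ} (hn : 1 ≤ n) : (oldSet n m).Nonempty := by
  refine ⟨⟨0, by omega⟩, ?_⟩
  simp only [oldSet, Finset.mem_filter, Finset.mem_univ, true_and]
  exact hn

lemma card_old_union {n m : ℕ} {S : Finset (Fin (n+m))}
    (hS : S ⊆ Finset.univ \ oldSet n m) :
    (oldSet n m ∪ S).card = n + S.card := by
  rw [Finset.card_union_of_disjoint, card_oldSet]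
  rw [Finset.disjoint_left]
  intro a ha haS
  have := hS haS
  rw [Finset.mem_sdiff] at this
  exact this.2 ha
section LBEind
open Finset
set_option linter.unusedSectionVars false

lemma restrictPart_card_le {α : Type*} [DecidableEq α] (ρ : Finset (Finset α)) (t : Finset α) :
    (restrictPart ρ t).card ≤ ρ.card :=
  le_trans (Finset.card_le_card (Finset.erase_subset _ _)) (Finset.card_image_le)

lemma den_marg {n m j : ℕ} {σ : ℝ} {V : ℕ → ℕ → ℝ} {B : Fin j → Finset (Fin (n+m))}
    (hn : 1 ≤ n)
    (hVrec : ∀ N k, 1 ≤ k → k ≤ N →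
      V N k = V (N + 1) (k + 1) + ((N : ℝ) - (k : ℝ) * σ) * V (N + 1) k)
    (hBinj : Function.Injective B)
    (hπ : IsPartOn (oldSet n m) (Finset.image B Finset.univ))
    (S : Finset (Fin (n+m))) : S ⊆ Finset.univ \ oldSet n m →
    ∑ ρ ∈ partsOn (oldSet n m ∪ S),
      (if restrictPart ρ (oldSet n m) = Finset.image B Finset.univ
        then V (n + S.card) ρ.card * ∏ C ∈ ρ, risingFac (1-σ) (C.card-1) else 0)
    = V n j * ∏ C ∈ Finset.image B Finset.univ, risingFac (1-σ) (C.card-1) := by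
  induction S using Finset.induction_on with
  | empty =>
    intro _
    rw [Finset.union_empty]
    have hcongr : ∀ ρ ∈ partsOn (oldSet n m),
        (if restrictPart ρ (oldSet n m) = Finset.image B Finset.univ
          then V (n + (∅ : Finset (Fin (n+m))).card) ρ.card *
            ∏ C ∈ ρ, risingFac (1-σ) (C.card-1) else 0)
        = (if ρ = Finset.image B Finset.univ
          then V (n + (∅ : Finset (Fin (n+m))).card) ρ.card *
            ∏ C ∈ ρ, risingFac (1-σ) (C.card-1) else 0) := by
      intro ρ hρ
      rw [restrictPart_self (mem_partsOn.mp hρ)]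
    rw [Finset.sum_congr rfl hcongr, Finset.sum_ite_eq' (partsOn (oldSet n m))]
    rw [if_pos (mem_partsOn.mpr hπ)]
    have hcard : (Finset.image B Finset.univ).card = j := by
      rw [Finset.card_image_of_injective _ hBinj, Finset.card_univ, Fintype.card_fin]
    rw [hcard]
    simp
  | @insert x S hx ih =>
    intro hsub
    have hxnew : x ∈ Finset.univ \ oldSet n m := hsub (Finset.mem_insert_self x S)
    have hSsub : S ⊆ Finset.univ \ oldSet n m :=
      fun a ha => hsub (Finset.mem_insert_of_mem ha)
    have hxold : x ∉ oldSet n m := (Finset.mem_sdiff.mp hxnew).2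
    have hxOS : x ∉ oldSet n m ∪ S := by
      rw [Finset.mem_union]
      rintro (h | h)
      · exact hxold h
      · exact hx h
    have hunion : oldSet n m ∪ insert x S = insert x (oldSet n m ∪ S) := by
      ext a
      simp only [Finset.mem_union, Finset.mem_insert]
      tauto
    have hcard' : (insert x S).card = S.card + 1 := Finset.card_insert_of_notMem hx
    rw [hunion, hcard', sum_partsOn_insert _ x hxOS]
    have hpt : ∀ ρ ∈ partsOn (oldSet n m ∪ S),
        ((if restrictPart (insert {x} ρ) (oldSet n m) = Finset.image B Finset.univ
            then V (n + (S.card + 1)) (insert {x} ρ).card *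
              ∏ C ∈ insert {x} ρ, risingFac (1-σ) (C.card-1) else 0)
          + ∑ C ∈ ρ,
            (if restrictPart (insert (insert x C) (ρ.erase C)) (oldSet n m)
                = Finset.image B Finset.univ
              then V (n + (S.card + 1)) (insert (insert x C) (ρ.erase C)).card *
                ∏ D ∈ insert (insert x C) (ρ.erase C), risingFac (1-σ) (D.card-1) else 0))
        = (if restrictPart ρ (oldSet n m) = Finset.image B Finset.univ
            then V (n + S.card) ρ.card * ∏ C ∈ ρ, risingFac (1-σ) (C.card-1) else 0) := by
      intro ρ hρ
      have h := mem_partsOn.mp hρ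
      have hxblk : ∀ C ∈ ρ, x ∉ C := fun C hC => h.not_mem_of_not_mem hC hxOS
      have hxnotmem : ({x} : Finset (Fin (n+m))) ∉ ρ :=
        fun hmem => hxblk _ hmem (Finset.mem_singleton_self x)
      have hcard1 : (insert ({x} : Finset (Fin (n+m))) ρ).card = ρ.card + 1 :=
        Finset.card_insert_of_notMem hxnotmem
      have hr1 : restrictPart (insert {x} ρ) (oldSet n m) = restrictPart ρ (oldSet n m) :=
        restrictPart_insert_new hxold
      have e2 : ∀ C ∈ ρ,
          (if restrictPart (insert (insert x C) (ρ.erase C)) (oldSet n m)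
              = Finset.image B Finset.univ
            then V (n + (S.card + 1)) (insert (insert x C) (ρ.erase C)).card *
              ∏ D ∈ insert (insert x C) (ρ.erase C), risingFac (1-σ) (D.card-1) else 0)
          = (if restrictPart ρ (oldSet n m) = Finset.image B Finset.univ
            then ((C.card : ℝ) - σ) *
              (V (n + S.card + 1) ρ.card * ∏ D ∈ ρ, risingFac (1-σ) (D.card-1)) else 0) := by
        intro C hC
        have hxC : x ∉ C := hxblk C hC
        have hnm : insert x C ∉ ρ.erase C :=
          fun hmem => hxblk _ (Finset.mem_of_mem_erase hmem) (Finset.mem_insert_self _ _)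
        have hρpos : 0 < ρ.card := Finset.card_pos.mpr ⟨C, hC⟩
        have hcard2 : (insert (insert x C) (ρ.erase C)).card = ρ.card := by
          rw [Finset.card_insert_of_notMem hnm, Finset.card_erase_of_mem hC]
          omega
        rw [restrictPart_insert_into hxold hC, hcard2,
          prod_w_insert_into σ hC hxC (h.block_nonempty hC) hnm]
        by_cases hres : restrictPart ρ (oldSet n m) = Finset.image B Finset.univ
        · rw [if_pos hres, if_pos hres]; ring
        · rw [if_neg hres, if_neg hres]
      rw [hr1, hcard1, prod_w_insert_new σ hxnotmem, Finset.sum_congr rfl e2]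
      by_cases hres : restrictPart ρ (oldSet n m) = Finset.image B Finset.univ
      · simp only [if_pos hres]
        rw [← Finset.sum_mul, hVrec (n + S.card) ρ.card
          (h.card_pos (Finset.Nonempty.mono Finset.subset_union_left (oldSet_nonempty hn)))
          (le_trans h.card_le (le_of_eq (card_old_union hSsub)))]
        have hsum : ∑ C ∈ ρ, ((C.card : ℝ) - σ)
            = ((n : ℝ) + (S.card : ℝ)) - (ρ.card : ℝ) * σ := by
          rw [Finset.sum_sub_distrib, Finset.sum_const, nsmul_eq_mul]
          have hsc : ∑ C ∈ ρ, (C.card : ℝ) = ((n + S.card : ℕ) : ℝ) := by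
            rw [← Nat.cast_sum, h.sum_card, card_old_union hSsub]
          rw [hsc]
          push_cast
          ring
        rw [hsum]
        push_cast
        ring
      · simp only [if_neg hres]
        simp
    rw [Finset.sum_congr rfl hpt]
    exact ih hSsub

end LBEind
section LBEnum
open Finset
set_option linter.unusedSectionVars false

lemma num_marg {n m j : ℕ} {σ : ℝ} {B : Fin j → Finset (Fin (n+m))}
    (hn : 1 ≤ n)
    (hBinj : Function.Injective B)
    (hπ : IsPartOn (oldSet n m) (Finset.image B Finset.univ))
    (i : Fin j)
    (S : Finset (Fin (n+m))) : S ⊆ Finset.univ \ oldSet n m → ∀ k : ℕ,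
    ∑ ρ ∈ partsOn (oldSet n m ∪ S),
      (if restrictPart ρ (oldSet n m) = Finset.image B Finset.univ
          ∧ B i ∈ ρ ∧ ρ.card = j + k
        then ∏ C ∈ ρ, risingFac (1-σ) (C.card-1) else 0)
    = Wfun σ ((n : ℝ) - ((B i).card : ℝ) - ((j : ℝ) - 1) * σ) S.card k *
        ∏ C ∈ Finset.image B Finset.univ, risingFac (1-σ) (C.card-1) := by
  have hcardπ : (Finset.image B Finset.univ).card = j := by
    rw [Finset.card_image_of_injective _ hBinj, Finset.card_univ, Fintype.card_fin]
  have hBiπ : B i ∈ Finset.image B Finset.univ :=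
    Finset.mem_image_of_mem B (Finset.mem_univ i)
  have hBisub : B i ⊆ oldSet n m := hπ.1 _ hBiπ
  have hBine : (B i).Nonempty := hπ.block_nonempty hBiπ
  induction S using Finset.induction_on with
  | empty =>
    intro _ k
    rw [Finset.union_empty]
    have hcongr : ∀ ρ ∈ partsOn (oldSet n m),
        (if restrictPart ρ (oldSet n m) = Finset.image B Finset.univ
            ∧ B i ∈ ρ ∧ ρ.card = j + k
          then ∏ C ∈ ρ, risingFac (1-σ) (C.card-1) else 0)
        = (if ρ = Finset.image B Finset.univ
          then (if k = 0 then ∏ C ∈ ρ, risingFac (1-σ) (C.card-1) else 0) else 0) := by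
      intro ρ hρ
      rw [restrictPart_self (mem_partsOn.mp hρ)]
      by_cases hρπ : ρ = Finset.image B Finset.univ
      · subst hρπ
        by_cases hk : k = 0
        · subst hk
          simp [hBiπ, hcardπ]
        · simp [hBiπ, hcardπ, Nat.left_eq_add, hk]
      · rw [if_neg hρπ, if_neg (fun hc => hρπ hc.1)]
    rw [Finset.sum_congr rfl hcongr, Finset.sum_ite_eq' (partsOn (oldSet n m)),
      if_pos (mem_partsOn.mpr hπ)]
    rcases k with _ | k
    · rw [if_pos rfl]
      simp [Wfun]
    · rw [if_neg (by omega)]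
      simp [Wfun]
  | @insert x S hx ih =>
    intro hsub k
    have hSsub : S ⊆ Finset.univ \ oldSet n m :=
      fun a ha => hsub (Finset.mem_insert_of_mem ha)
    have hxold : x ∉ oldSet n m := (Finset.mem_sdiff.mp (hsub (Finset.mem_insert_self x S))).2
    have hxOS : x ∉ oldSet n m ∪ S := by
      rw [Finset.mem_union]
      rintro (h | h)
      · exact hxold h
      · exact hx h
    have hunion : oldSet n m ∪ insert x S = insert x (oldSet n m ∪ S) := by
      ext a
      simp only [Finset.mem_union, Finset.mem_insert]
      tauto
    have hxBi : x ∉ B i := fun hmem => hxold (hBisub hmem)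
    rw [hunion, sum_partsOn_insert _ x hxOS]
    have hpt : ∀ ρ ∈ partsOn (oldSet n m ∪ S),
        ((if restrictPart (insert {x} ρ) (oldSet n m) = Finset.image B Finset.univ
            ∧ B i ∈ insert {x} ρ ∧ (insert {x} ρ).card = j + k
          then ∏ C ∈ insert {x} ρ, risingFac (1-σ) (C.card-1) else 0)
          + ∑ C ∈ ρ,
            (if restrictPart (insert (insert x C) (ρ.erase C)) (oldSet n m)
                = Finset.image B Finset.univ
              ∧ B i ∈ insert (insert x C) (ρ.erase C)
              ∧ (insert (insert x C) (ρ.erase C)).card = j + k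
            then ∏ D ∈ insert (insert x C) (ρ.erase C), risingFac (1-σ) (D.card-1) else 0))
        = (match k with
            | 0 => (0 : ℝ)
            | k' + 1 =>
              (if restrictPart ρ (oldSet n m) = Finset.image B Finset.univ
                  ∧ B i ∈ ρ ∧ ρ.card = j + k'
                then ∏ C ∈ ρ, risingFac (1-σ) (C.card-1) else 0))
          + (((n : ℝ) - ((B i).card : ℝ) - ((j : ℝ) - 1) * σ) + (S.card : ℝ) - (k : ℝ) * σ) *
            (if restrictPart ρ (oldSet n m) = Finset.image B Finset.univ
                ∧ B i ∈ ρ ∧ ρ.card = j + k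
              then ∏ C ∈ ρ, risingFac (1-σ) (C.card-1) else 0) := by
      intro ρ hρ
      have h := mem_partsOn.mp hρ
      have hxblk : ∀ C ∈ ρ, x ∉ C := fun C hC => h.not_mem_of_not_mem hC hxOS
      have hxnotmem : ({x} : Finset (Fin (n+m))) ∉ ρ :=
        fun hmem => hxblk _ hmem (Finset.mem_singleton_self x)
      have hBix : B i ≠ ({x} : Finset (Fin (n+m))) := by
        intro he
        exact hxBi (he ▸ Finset.mem_singleton_self x)
      have hmem1 : (B i ∈ insert ({x} : Finset (Fin (n+m))) ρ) ↔ B i ∈ ρ := by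
        rw [Finset.mem_insert]
        exact ⟨fun hc => hc.elim (fun he => absurd he hBix) id, Or.inr⟩
      -- first term
      have hterm1 : (if restrictPart (insert {x} ρ) (oldSet n m) = Finset.image B Finset.univ
            ∧ B i ∈ insert {x} ρ ∧ (insert {x} ρ).card = j + k
          then ∏ C ∈ insert {x} ρ, risingFac (1-σ) (C.card-1) else 0)
          = (match k with
            | 0 => (0 : ℝ)
            | k' + 1 =>
              (if restrictPart ρ (oldSet n m) = Finset.image B Finset.univ
                  ∧ B i ∈ ρ ∧ ρ.card = j + k'
                then ∏ C ∈ ρ, risingFac (1-σ) (C.card-1) else 0)) := by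
        rw [restrictPart_insert_new hxold, Finset.card_insert_of_notMem hxnotmem,
          prod_w_insert_new σ hxnotmem]
        rcases k with _ | k'
        · rw [if_neg]
          rintro ⟨hres, -, hcc⟩
          have : j ≤ ρ.card := by
            calc j = (restrictPart ρ (oldSet n m)).card := by rw [hres, hcardπ]
            _ ≤ ρ.card := restrictPart_card_le ρ _
          omega
        · have hiff : (restrictPart ρ (oldSet n m) = Finset.image B Finset.univ
              ∧ B i ∈ insert ({x} : Finset (Fin (n+m))) ρ ∧ ρ.card + 1 = j + (k' + 1))
              ↔ (restrictPart ρ (oldSet n m) = Finset.image B Finset.univ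
              ∧ B i ∈ ρ ∧ ρ.card = j + k') := by
            rw [hmem1]
            constructor
            · rintro ⟨h1, h2, h3⟩; exact ⟨h1, h2, by omega⟩
            · rintro ⟨h1, h2, h3⟩; exact ⟨h1, h2, by omega⟩
          exact if_congr hiff rfl rfl
      -- second sum
      have hterm2 : ∑ C ∈ ρ,
            (if restrictPart (insert (insert x C) (ρ.erase C)) (oldSet n m)
                = Finset.image B Finset.univ
              ∧ B i ∈ insert (insert x C) (ρ.erase C)
              ∧ (insert (insert x C) (ρ.erase C)).card = j + k
            then ∏ D ∈ insert (insert x C) (ρ.erase C), risingFac (1-σ) (D.card-1) else 0)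
          = (((n : ℝ) - ((B i).card : ℝ) - ((j : ℝ) - 1) * σ) + (S.card : ℝ) - (k : ℝ) * σ) *
            (if restrictPart ρ (oldSet n m) = Finset.image B Finset.univ
                ∧ B i ∈ ρ ∧ ρ.card = j + k
              then ∏ C ∈ ρ, risingFac (1-σ) (C.card-1) else 0) := by
        have hrw : ∀ C ∈ ρ,
            (if restrictPart (insert (insert x C) (ρ.erase C)) (oldSet n m)
                = Finset.image B Finset.univ
              ∧ B i ∈ insert (insert x C) (ρ.erase C)
              ∧ (insert (insert x C) (ρ.erase C)).card = j + k
            then ∏ D ∈ insert (insert x C) (ρ.erase C), risingFac (1-σ) (D.card-1) else 0)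
            = (if restrictPart ρ (oldSet n m) = Finset.image B Finset.univ
                ∧ (B i ∈ ρ ∧ C ≠ B i) ∧ ρ.card = j + k
              then ((C.card : ℝ) - σ) * ∏ D ∈ ρ, risingFac (1-σ) (D.card-1) else 0) := by
          intro C hC
          have hxC : x ∉ C := hxblk C hC
          have hnm : insert x C ∉ ρ.erase C :=
            fun hmem => hxblk _ (Finset.mem_of_mem_erase hmem) (Finset.mem_insert_self _ _)
          have hρpos : 0 < ρ.card := Finset.card_pos.mpr ⟨C, hC⟩
          have hcard2 : (insert (insert x C) (ρ.erase C)).card = ρ.card := by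
            rw [Finset.card_insert_of_notMem hnm, Finset.card_erase_of_mem hC]
            omega
          have hBiins : B i ≠ insert x C := by
            intro he
            exact hxBi (he ▸ Finset.mem_insert_self x C)
          have hmem2 : (B i ∈ insert (insert x C) (ρ.erase C)) ↔ (B i ∈ ρ ∧ C ≠ B i) := by
            rw [Finset.mem_insert, Finset.mem_erase]
            constructor
            · rintro (he | ⟨hne, hmem⟩)
              · exact absurd he hBiins
              · exact ⟨hmem, fun e => hne e.symm⟩
            · rintro ⟨hmem, hne⟩
              exact Or.inr ⟨fun e => hne e.symm, hmem⟩
          rw [restrictPart_insert_into hxold hC, hcard2,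
            prod_w_insert_into σ hC hxC (h.block_nonempty hC) hnm]
          simp only [hmem2]
        rw [Finset.sum_congr rfl hrw]
        by_cases hcond : restrictPart ρ (oldSet n m) = Finset.image B Finset.univ
            ∧ B i ∈ ρ ∧ ρ.card = j + k
        · obtain ⟨hres, hBimem, hcc⟩ := hcond
          have hstep : ∀ C ∈ ρ,
              (if restrictPart ρ (oldSet n m) = Finset.image B Finset.univ
                  ∧ (B i ∈ ρ ∧ C ≠ B i) ∧ ρ.card = j + k
                then ((C.card : ℝ) - σ) * ∏ D ∈ ρ, risingFac (1-σ) (D.card-1) else 0)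
              = (if C ≠ B i
                then ((C.card : ℝ) - σ) * ∏ D ∈ ρ, risingFac (1-σ) (D.card-1) else 0) := by
            intro C hC
            by_cases hCBi : C = B i
            · rw [if_neg (fun hc => hc.2.1.2 hCBi), if_neg (by simpa using hCBi)]
            · rw [if_pos ⟨hres, ⟨hBimem, hCBi⟩, hcc⟩, if_pos hCBi]
          rw [Finset.sum_congr rfl hstep, if_pos ⟨hres, hBimem, hcc⟩]
          have hsplit : ∑ C ∈ ρ, (if C ≠ B i
              then ((C.card : ℝ) - σ) * ∏ D ∈ ρ, risingFac (1-σ) (D.card-1) else 0)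
              = (∑ C ∈ ρ, ((C.card : ℝ) - σ)
                  - (((B i).card : ℝ) - σ)) * ∏ D ∈ ρ, risingFac (1-σ) (D.card-1) := by
            rw [← Finset.sum_filter, Finset.filter_ne', Finset.sum_erase_eq_sub hBimem,
              sub_mul, ← Finset.sum_mul]
            ring
          rw [hsplit]
          have hsum : ∑ C ∈ ρ, ((C.card : ℝ) - σ)
              = ((n : ℝ) + (S.card : ℝ)) - (ρ.card : ℝ) * σ := by
            rw [Finset.sum_sub_distrib, Finset.sum_const, nsmul_eq_mul]
            have hsc : ∑ C ∈ ρ, (C.card : ℝ) = ((n + S.card : ℕ) : ℝ) := by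
              rw [← Nat.cast_sum, h.sum_card, card_old_union hSsub]
            rw [hsc]
            push_cast
            ring
          rw [hsum, hcc]
          push_cast
          ring
        · have hzero : ∀ C ∈ ρ,
              (if restrictPart ρ (oldSet n m) = Finset.image B Finset.univ
                  ∧ (B i ∈ ρ ∧ C ≠ B i) ∧ ρ.card = j + k
                then ((C.card : ℝ) - σ) * ∏ D ∈ ρ, risingFac (1-σ) (D.card-1) else 0) = 0 := by
            intro C hC
            rw [if_neg]
            rintro ⟨h1, ⟨h2, -⟩, h3⟩
            exact hcond ⟨h1, h2, h3⟩
          rw [Finset.sum_congr rfl hzero, Finset.sum_const, if_neg hcond]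
          simp
      rw [hterm1, hterm2]
    rw [Finset.sum_congr rfl hpt, Finset.sum_add_distrib, ← Finset.mul_sum, ih hSsub k]
    have hkm : (∑ ρ ∈ partsOn (oldSet n m ∪ S), (match k with
        | 0 => (0:ℝ)
        | k' + 1 =>
          (if restrictPart ρ (oldSet n m) = Finset.image B Finset.univ
              ∧ B i ∈ ρ ∧ ρ.card = j + k'
            then ∏ C ∈ ρ, risingFac (1-σ) (C.card-1) else 0)))
        = (match k with
          | 0 => (0:ℝ)
          | k' + 1 => Wfun σ ((n : ℝ) - ((B i).card : ℝ) - ((j : ℝ) - 1) * σ) S.card k' *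
            ∏ C ∈ Finset.image B Finset.univ, risingFac (1-σ) (C.card-1)) := by
      rcases k with _ | k'
      · simp
      · exact ih hSsub k'
    rw [hkm, Finset.card_insert_of_notMem hx]
    rcases k with _ | k'
    · show (0:ℝ) + _ = _
      simp only [Wfun]
      push_cast
      ring
    · show _ + _ = _
      simp only [Wfun]
      push_cast
      ring

end LBEnum
section LBEfinal
open Finset
set_option linter.unusedSectionVars false

lemma scount_zero_iff {n m j : ℕ} {B : Fin j → Finset (Fin (n+m))}
    (hπ : IsPartOn (oldSet n m) (Finset.image B Finset.univ))
    {ρ : Finset (Finset (Fin (n+m)))}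
    (hρp : IsPartOn Finset.univ ρ)
    (hres : restrictPart ρ (oldSet n m) = Finset.image B Finset.univ)
    (i : Fin j) :
    Scount n m (B i) ρ = 0 ↔ B i ∈ ρ := by
  have hBiπ : B i ∈ Finset.image B Finset.univ :=
    Finset.mem_image_of_mem B (Finset.mem_univ i)
  have hBisub : B i ⊆ oldSet n m := hπ.1 _ hBiπ
  have hBine : (B i).Nonempty := hπ.block_nonempty hBiπ
  constructor
  · intro h0
    have hmem : B i ∈ restrictPart ρ (oldSet n m) := hres ▸ hBiπ
    unfold restrictPart at hmem
    obtain ⟨hne, hmem2⟩ := Finset.mem_erase.mp hmem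
    obtain ⟨C, hC, hCeq⟩ := Finset.mem_image.mp hmem2
    have hBiC : B i ⊆ C := by
      rw [← hCeq]; exact Finset.inter_subset_left
    have hCfil : C ∈ ρ.filter (fun D => B i ⊆ D) := Finset.mem_filter.mpr ⟨hC, hBiC⟩
    unfold Scount at h0
    rw [Finset.sum_eq_zero_iff] at h0
    have hcd := h0 C hCfil
    have hCsub : C ⊆ oldSet n m := by
      intro a ha
      by_contra hna
      have : a ∈ C \ oldSet n m := Finset.mem_sdiff.mpr ⟨ha, hna⟩
      rw [Finset.card_eq_zero] at hcd
      rw [hcd] at this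
      exact absurd this (Finset.notMem_empty a)
    have : C = B i := by
      rw [← hCeq]
      exact (Finset.inter_eq_left.mpr hCsub).symm ▸ rfl
    exact this ▸ hC
  · intro hBiρ
    have hfil : ρ.filter (fun D => B i ⊆ D) = {B i} := by
      ext C
      simp only [Finset.mem_filter, Finset.mem_singleton]
      constructor
      · rintro ⟨hC, hsub⟩
        obtain ⟨a, ha⟩ := hBine
        exact hρp.eq_of_mem hC hBiρ (hsub ha) ha
      · rintro rfl
        exact ⟨hBiρ, Finset.Subset.refl _⟩
    unfold Scount
    rw [hfil, Finset.sum_singleton, Finset.card_eq_zero, Finset.sdiff_eq_empty_iff_subset]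
    exact hBisub

end LBEfinal

set_option maxHeartbeats 1000000

/-- expected number of re-observed old species, given complete information. -/
theorem looking_backward_estimator_complete
    (n m j : ℕ) (hn : 1 ≤ n) (hm : 1 ≤ m)
    (σ : ℝ) (hσ1 : σ < 1) (hσ0 : σ ≠ 0)
    (V : ℕ → ℕ → ℝ) (hV11 : V 1 1 = 1)
    (hVnn : ∀ N k, 1 ≤ k → k ≤ N → 0 ≤ V N k)
    (hVrec : ∀ N k, 1 ≤ k → k ≤ N →
      V N k = V (N + 1) (k + 1) + ((N : ℝ) - (k : ℝ) * σ) * V (N + 1) k)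
    (B : Fin j → Finset (Fin (n + m))) (hBinj : Function.Injective B)
    (hπ : IsPartOn (oldSet n m) (Finset.image B Finset.univ))
    (hVnj : 0 < V n j) :
    condExpPi σ V n m (Finset.image B Finset.univ)
        (fun ρ => (RcntB n m j B ρ : ℝ)) =
      (j : ℝ) -
        ∑ i ∈ Finset.Icc 1 n,
          ((Finset.univ.filter fun ℓ : Fin j => (B ℓ).card = i).card : ℝ) *
            ∑ k ∈ Finset.range (m + 1),
              V (n + m) (j + k) / V n j *
                (gfc m k σ (-(n : ℝ) + (i : ℝ) + ((j : ℝ) - 1) * σ) / σ ^ k) := by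
  classical
  set old := oldSet n m with hold
  set π := Finset.image B Finset.univ with hπdef
  set P := ∏ C ∈ π, risingFac (1-σ) (C.card - 1) with hPdef
  set Snew := (Finset.univ : Finset (Fin (n+m))) \ old with hSnew
  have hcardu : (Finset.univ : Finset (Fin (n+m))).card = n + m := by
    rw [Finset.card_univ, Fintype.card_fin]
  have hScard : Snew.card = m := by
    rw [hSnew, Finset.card_sdiff_of_subset (Finset.subset_univ _), hcardu, hold, card_oldSet]
    omega
  have hUnionAll : old ∪ Snew = Finset.univ :=
    Finset.union_sdiff_of_subset (Finset.subset_univ _)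
  have hcardπ : π.card = j := by
    rw [hπdef, Finset.card_image_of_injective _ hBinj, Finset.card_univ, Fintype.card_fin]
  have hjn : j ≤ n := by
    have := hπ.card_le
    rw [hcardπ, hold, card_oldSet] at this
    exact this
  have hPpos : 0 < P := by
    rw [hPdef]
    exact Finset.prod_pos (fun C hC => risingFac_pos (by linarith) _)
  have hext : extensions n m π = (partsOn Finset.univ).filter
      (fun ρ => restrictPart ρ old = π) := by
    unfold extensions partsOn
    rw [Finset.filter_filter]
  have hDen : ∑ ρ ∈ extensions n m π, gibbsW σ (V (n+m)) ρ = V n j * P := by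
    have hd := den_marg (m := m) hn hVrec hBinj hπ Snew (Finset.Subset.refl _)
    rw [hScard, hUnionAll] at hd
    rw [hext, Finset.sum_filter]
    rw [← hd]
    refine Finset.sum_congr rfl fun ρ _ => ?_
    by_cases hres : restrictPart ρ old = π
    · rw [if_pos hres, if_pos hres]
      simp [gibbsW]
    · rw [if_neg hres, if_neg hres]
  -- numerator per-block sums
  have hnum : ∀ i : Fin j,
      ∑ ρ ∈ partsOn (Finset.univ : Finset (Fin (n+m))),
        (if restrictPart ρ old = π ∧ B i ∈ ρ
          then V (n+m) ρ.card * ∏ C ∈ ρ, risingFac (1-σ) (C.card-1) else 0)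
      = ∑ k ∈ Finset.range (m+1), V (n+m) (j+k) *
          (Wfun σ ((n : ℝ) - ((B i).card : ℝ) - ((j : ℝ) - 1) * σ) m k * P) := by
    intro i
    have hnm := num_marg (m := m) (σ := σ) hn hBinj hπ i Snew (Finset.Subset.refl _)
    rw [hScard, hUnionAll] at hnm
    set Ei := (partsOn (Finset.univ : Finset (Fin (n+m)))).filter
        (fun ρ => restrictPart ρ old = π ∧ B i ∈ ρ) with hEidef
    rw [← Finset.sum_filter]
    have hmaps : ∀ ρ ∈ Ei, ρ.card ∈ (Finset.range (n+m+1-j)).image (fun k => j + k) := by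
      intro ρ hρ
      rw [hEidef, Finset.mem_filter] at hρ
      have h1 : j ≤ ρ.card := by
        rw [← hcardπ, ← hρ.2.1]
        exact restrictPart_card_le ρ old
      have h2 : ρ.card ≤ n + m := by
        have := (mem_partsOn.mp hρ.1).card_le
        rwa [hcardu] at this
      exact Finset.mem_image.mpr ⟨ρ.card - j, Finset.mem_range.mpr (by omega), by omega⟩
    rw [← Finset.sum_fiberwise_of_maps_to hmaps
      (fun ρ => V (n+m) ρ.card * ∏ C ∈ ρ, risingFac (1-σ) (C.card-1))]
    rw [Finset.sum_image (fun a _ b _ h => by omega)]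
    have hinner : ∀ k : ℕ, ∑ ρ ∈ Ei.filter (fun ρ => ρ.card = j + k),
        (V (n+m) ρ.card * ∏ C ∈ ρ, risingFac (1-σ) (C.card-1))
        = V (n+m) (j+k) *
            (Wfun σ ((n : ℝ) - ((B i).card : ℝ) - ((j : ℝ) - 1) * σ) m k * P) := by
      intro k
      have e1 : Ei.filter (fun ρ => ρ.card = j + k)
          = (partsOn (Finset.univ : Finset (Fin (n+m)))).filter
              (fun ρ => restrictPart ρ old = π ∧ B i ∈ ρ ∧ ρ.card = j + k) := by
        rw [hEidef, Finset.filter_filter]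
        exact Finset.filter_congr (fun ρ _ => by tauto)
      have e2 : ∀ ρ ∈ (partsOn (Finset.univ : Finset (Fin (n+m)))).filter
            (fun ρ => restrictPart ρ old = π ∧ B i ∈ ρ ∧ ρ.card = j + k),
          V (n+m) ρ.card * ∏ C ∈ ρ, risingFac (1-σ) (C.card-1)
          = V (n+m) (j+k) * ∏ C ∈ ρ, risingFac (1-σ) (C.card-1) := by
        intro ρ hρ
        rw [(Finset.mem_filter.mp hρ).2.2.2]
      rw [e1, Finset.sum_congr rfl e2, Finset.sum_filter]
      have e3 : ∀ ρ ∈ partsOn (Finset.univ : Finset (Fin (n+m))),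
          (if restrictPart ρ old = π ∧ B i ∈ ρ ∧ ρ.card = j + k
            then V (n+m) (j+k) * ∏ C ∈ ρ, risingFac (1-σ) (C.card-1) else 0)
          = V (n+m) (j+k) * (if restrictPart ρ old = π ∧ B i ∈ ρ ∧ ρ.card = j + k
            then ∏ C ∈ ρ, risingFac (1-σ) (C.card-1) else 0) := by
        intro ρ _
        split_ifs
        · rfl
        · rw [mul_zero]
      rw [Finset.sum_congr rfl e3, ← Finset.mul_sum, hnm k]
    rw [Finset.sum_congr rfl (fun k _ => hinner k)]
    refine (Finset.sum_subset ?_ ?_).symm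
    · intro k hk
      rw [Finset.mem_range] at *
      omega
    · intro k hk1 hk2
      rw [Finset.mem_range] at hk1 hk2
      rw [Wfun_eq_zero_of_gt σ _ (by omega)]
      ring
  -- RcntB rewrite
  have hR : ∀ ρ ∈ extensions n m π, ((RcntB n m j B ρ : ℕ) : ℝ)
      = (j : ℝ) - ∑ i : Fin j, (if B i ∈ ρ then (1:ℝ) else 0) := by
    intro ρ hρ
    rw [hext, Finset.mem_filter] at hρ
    obtain ⟨hρp, hres⟩ := hρ
    have hρpart := mem_partsOn.mp hρp
    have hiff : ∀ i : Fin j, Scount n m (B i) ρ = 0 ↔ B i ∈ ρ :=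
      fun i => scount_zero_iff hπ hρpart hres i
    unfold RcntB
    have hsdiff : (Finset.univ.filter fun i : Fin j => Scount n m (B i) ρ ≠ 0)
        = Finset.univ \ (Finset.univ.filter fun i : Fin j => Scount n m (B i) ρ = 0) := by
      ext i
      simp [Finset.mem_sdiff]
    rw [hsdiff, Finset.card_sdiff_of_subset (Finset.filter_subset _ _)]
    have hle : (Finset.univ.filter fun i : Fin j => Scount n m (B i) ρ = 0).card
        ≤ (Finset.univ : Finset (Fin j)).card := Finset.card_filter_le _ _
    rw [Finset.card_univ, Fintype.card_fin] at *
    rw [Nat.cast_sub hle]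
    congr 1
    rw [Finset.card_filter]
    push_cast
    exact Finset.sum_congr rfl fun i _ => if_congr (hiff i) rfl rfl
  -- numerator total
  have hNum : ∑ ρ ∈ extensions n m π, (RcntB n m j B ρ : ℝ) * gibbsW σ (V (n+m)) ρ
      = (j : ℝ) * (V n j * P) - ∑ i : Fin j, ∑ k ∈ Finset.range (m+1), V (n+m) (j+k) *
          (Wfun σ ((n : ℝ) - ((B i).card : ℝ) - ((j : ℝ) - 1) * σ) m k * P) := by
    have hRs : ∀ ρ ∈ extensions n m π,
        ((RcntB n m j B ρ : ℕ) : ℝ) * gibbsW σ (V (n+m)) ρ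
        = ((j:ℝ) - ∑ i : Fin j, (if B i ∈ ρ then (1:ℝ) else 0)) * gibbsW σ (V (n+m)) ρ :=
      fun ρ hρ => by rw [hR ρ hρ]
    rw [Finset.sum_congr rfl hRs]
    have hexp : ∀ ρ ∈ extensions n m π,
        ((j:ℝ) - ∑ i : Fin j, (if B i ∈ ρ then (1:ℝ) else 0)) * gibbsW σ (V (n+m)) ρ
        = (j:ℝ) * gibbsW σ (V (n+m)) ρ
          - ∑ i : Fin j, (if B i ∈ ρ then (1:ℝ) else 0) * gibbsW σ (V (n+m)) ρ := by
      intro ρ _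
      rw [sub_mul, Finset.sum_mul]
    rw [Finset.sum_congr rfl hexp, Finset.sum_sub_distrib, ← Finset.mul_sum, hDen,
      Finset.sum_comm]
    refine congrArg (fun z => (j:ℝ) * (V n j * P) - z) ?_
    refine Finset.sum_congr rfl fun i _ => ?_
    rw [← hnum i, hext, Finset.sum_filter]
    refine Finset.sum_congr rfl fun ρ _ => ?_
    by_cases hres : restrictPart ρ old = π
    · rw [if_pos hres]
      by_cases hBi : B i ∈ ρ
      · rw [if_pos hBi, if_pos ⟨hres, hBi⟩, one_mul]
        simp [gibbsW]
      · rw [if_neg hBi, if_neg (fun hc => hBi hc.2), zero_mul]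
    · rw [if_neg hres, if_neg (fun hc => hres hc.1)]
  -- final division and regrouping
  have hDenne : V n j * P ≠ 0 := ne_of_gt (mul_pos hVnj hPpos)
  unfold condExpPi
  rw [hNum, hDen, sub_div, mul_div_assoc, div_self hDenne, mul_one, Finset.sum_div]
  congr 1
  have hTi : ∀ i : Fin j,
      (∑ k ∈ Finset.range (m+1), V (n+m) (j+k) *
        (Wfun σ ((n : ℝ) - ((B i).card : ℝ) - ((j : ℝ) - 1) * σ) m k * P)) / (V n j * P)
      = ∑ k ∈ Finset.range (m + 1),
          V (n + m) (j + k) / V n j *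
            (gfc m k σ (-(n : ℝ) + (((B i).card : ℕ) : ℝ) + ((j : ℝ) - 1) * σ) / σ ^ k) := by
    intro i
    rw [Finset.sum_div]
    refine Finset.sum_congr rfl fun k _ => ?_
    rw [Wfun_eq_gfc_div σ _ hσ0 m k,
      show -((n : ℝ) - ((B i).card : ℝ) - ((j : ℝ) - 1) * σ)
        = -(n : ℝ) + (((B i).card : ℕ) : ℝ) + ((j : ℝ) - 1) * σ from by push_cast; ring]
    field_simp
  rw [Finset.sum_congr rfl (fun i _ => hTi i)]
  -- regroup by block size
  have hmaps2 : ∀ ℓ ∈ (Finset.univ : Finset (Fin j)), (B ℓ).card ∈ Finset.Icc 1 n := by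
    intro ℓ _
    rw [Finset.mem_Icc]
    have hBℓπ : B ℓ ∈ π := Finset.mem_image_of_mem B (Finset.mem_univ ℓ)
    constructor
    · exact Finset.card_pos.mpr (hπ.block_nonempty hBℓπ)
    · calc (B ℓ).card ≤ old.card := Finset.card_le_card (hπ.1 _ hBℓπ)
      _ = n := by rw [hold, card_oldSet]
  rw [← Finset.sum_fiberwise_of_maps_to hmaps2 (fun ℓ : Fin j => ∑ k ∈ Finset.range (m + 1),
      V (n + m) (j + k) / V n j *
        (gfc m k σ (-(n : ℝ) + (((B ℓ).card : ℕ) : ℝ) + ((j : ℝ) - 1) * σ) / σ ^ k))]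
  refine Finset.sum_congr rfl fun b hb => ?_
  have hconst : ∀ ℓ ∈ (Finset.univ : Finset (Fin j)).filter (fun ℓ => (B ℓ).card = b),
      (∑ k ∈ Finset.range (m + 1), V (n + m) (j + k) / V n j *
        (gfc m k σ (-(n : ℝ) + (((B ℓ).card : ℕ) : ℝ) + ((j : ℝ) - 1) * σ) / σ ^ k))
      = ∑ k ∈ Finset.range (m + 1), V (n + m) (j + k) / V n j *
        (gfc m k σ (-(n : ℝ) + (b : ℝ) + ((j : ℝ) - 1) * σ) / σ ^ k) := by
    intro ℓ hℓ
    rw [(Finset.mem_filter.mp hℓ).2]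
  rw [Finset.sum_congr rfl hconst, Finset.sum_const, nsmul_eq_mul]
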